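/- Let m ≥ 2 be an integer. For every t ∈ {0,…,m}, the cardinality of 𝒮_t equals ((m−t)! · u(m,t))², where u(m,t) = Σ_{1 ≤ i₁ < ⋯ < i_t ≤ m} i₁·(i₂ − 1)⋯(i_t − (t−1)). -/

import Mathlib

open Finset Function Equiv

/-- `u m t = Σ_{1 ≤ i₁ < ⋯ < i_t ≤ m} ∏_{k=1}^t (i_k − (k−1))`, the sum being over
all strictly increasing `t`-tuples in `{1,…,m}` (so `u m 0 = 1`).
A tuple is encoded by a strictly monotone function `f : Fin t → Fin m`,
with `i_k = (f ⟨k-1⟩ : ℕ) + 1`; the factor `i_k − (k−1)` is `(f k : ℕ) + 1 - (k : ℕ)`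
for `k : Fin t` (0-indexed). -/
def u (m t : ℕ) : ℕ :=
  ∑ f ∈ Finset.univ.filter (fun f : Fin t → Fin m => ∀ a b : Fin t, a < b → f a < f b),
    ∏ k : Fin t, ((f k : ℕ) + 1 - (k : ℕ))

theorem stair (m : ℕ) : ∀ (t : ℕ) (f : Fin t → Fin m), StrictMono f →
    (Finset.univ.filter (fun h : Fin t → Fin m =>
      Function.Injective h ∧ ∀ k, h k ≤ f k)).card
      = ∏ k : Fin t, ((f k : ℕ) + 1 - (k : ℕ)) := by
  intro t
  induction t with
  | zero =>
    intro f _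
    rw [Finset.filter_true_of_mem]
    · simp
    · intro h _
      exact ⟨fun a => a.elim0, fun k => k.elim0⟩
  | succ t ih =>
    intro f hf
    have hf' : StrictMono (f ∘ Fin.castSucc) :=
      hf.comp (Fin.strictMono_castSucc)
    rw [Finset.card_eq_sum_card_fiberwise
      (f := fun h : Fin (t+1) → Fin m => Fin.init h)
      (t := Finset.univ.filter (fun h : Fin t → Fin m =>
        Function.Injective h ∧ ∀ k, h k ≤ (f ∘ Fin.castSucc) k))]
    · have key : ∀ h' ∈ Finset.univ.filter (fun h : Fin t → Fin m =>
          Function.Injective h ∧ ∀ k, h k ≤ (f ∘ Fin.castSucc) k),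
          ((Finset.univ.filter (fun h : Fin (t+1) → Fin m =>
            Function.Injective h ∧ ∀ k, h k ≤ f k)).filter
            (fun h => Fin.init h = h')).card
            = ((f (Fin.last t) : ℕ) + 1) - t := by
        intro h' hh'
        rw [Finset.mem_filter] at hh'
        obtain ⟨-, hinj, hle⟩ := hh'
        have himsub : Finset.image h' Finset.univ ⊆ Finset.Iic (f (Fin.last t)) := by
          intro v hv
          rw [Finset.mem_image] at hv
          obtain ⟨k, -, rfl⟩ := hv
          rw [Finset.mem_Iic]
          exact le_of_lt (lt_of_le_of_lt (hle k) (hf (Fin.castSucc_lt_last k)))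
        have hcard : (Finset.Iic (f (Fin.last t)) \ Finset.image h' Finset.univ).card
            = ((f (Fin.last t) : ℕ) + 1) - t := by
          rw [Finset.card_sdiff_of_subset himsub, Fin.card_Iic,
            Finset.card_image_of_injective _ hinj, Finset.card_univ, Fintype.card_fin]
        rw [← hcard]
        apply Finset.card_bij (fun h _ => h (Fin.last t))
        · intro h hh
          simp only [Finset.mem_filter, Finset.mem_univ, true_and] at hh
          obtain ⟨⟨hinj2, hle2⟩, hinit⟩ := hh
          rw [Finset.mem_sdiff, Finset.mem_Iic, Finset.mem_image]
          refine ⟨hle2 _, ?_⟩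
          rintro ⟨k, -, hk⟩
          rw [← hinit] at hk
          exact (Fin.castSucc_lt_last k).ne (hinj2 hk)
        · intro h1 hh1 h2 hh2 hval
          simp only [Finset.mem_filter] at hh1 hh2
          funext x
          refine Fin.lastCases ?_ ?_ x
          · exact hval
          · intro k
            have := congrFun (hh1.2.trans hh2.2.symm) k
            exact this
        · intro v hv
          rw [Finset.mem_sdiff, Finset.mem_Iic, Finset.mem_image] at hv
          obtain ⟨hvle, hvnot⟩ := hv
          refine ⟨Fin.snoc h' v, ?_, by simp⟩
          simp only [Finset.mem_filter, Finset.mem_univ, true_and]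
          refine ⟨⟨?_, ?_⟩, ?_⟩
          · intro a b hab
            rcases Fin.eq_castSucc_or_eq_last a with ⟨a', rfl⟩ | rfl <;>
              rcases Fin.eq_castSucc_or_eq_last b with ⟨b', rfl⟩ | rfl
            · rw [Fin.snoc_castSucc, Fin.snoc_castSucc] at hab
              exact congrArg _ (hinj hab)
            · rw [Fin.snoc_last, Fin.snoc_castSucc] at hab
              exact absurd ⟨_, Finset.mem_univ _, hab⟩ hvnot
            · rw [Fin.snoc_last, Fin.snoc_castSucc] at hab
              exact absurd ⟨_, Finset.mem_univ _, hab.symm⟩ hvnot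
            · rfl
          · intro k
            refine Fin.lastCases ?_ ?_ k
            · rw [Fin.snoc_last]; exact hvle
            · intro k'
              rw [Fin.snoc_castSucc]
              exact hle k'
          · exact Fin.init_snoc (α := fun _ => Fin m) v h'
      rw [Finset.sum_congr rfl key, Finset.sum_const, smul_eq_mul,
        ih (f ∘ Fin.castSucc) hf', Fin.prod_univ_castSucc]
      simp [Fin.val_last]
    · intro h hh
      simp only [Finset.mem_coe, Finset.mem_filter, Finset.mem_univ, true_and] at hh ⊢
      obtain ⟨hinj, hle⟩ := hh
      exact ⟨fun a b hab => Fin.castSucc_injective t (hinj hab), fun k => hle _⟩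

theorem cardW (m t : ℕ) :
    (Finset.univ.filter (fun w : (Fin t → Fin m) × (Fin t → Fin m) =>
      StrictMono w.1 ∧ Function.Injective w.2 ∧ ∀ k, w.2 k ≤ w.1 k)).card = u m t := by
  rw [u, Finset.card_eq_sum_card_fiberwise
    (f := fun w : (Fin t → Fin m) × (Fin t → Fin m) => w.1)
    (t := Finset.univ.filter (fun f : Fin t → Fin m => ∀ a b : Fin t, a < b → f a < f b))]
  · apply Finset.sum_congr rfl
    intro f hf
    rw [Finset.mem_filter] at hf
    have hf' : StrictMono f := fun a b hab => hf.2 a b hab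
    rw [← stair m t f hf']
    apply Finset.card_bij (fun w _ => w.2)
    · intro w hw
      simp only [Finset.mem_filter, Finset.mem_univ, true_and] at hw ⊢
      obtain ⟨⟨h1, h2, h3⟩, h4⟩ := hw
      subst h4
      exact ⟨h2, h3⟩
    · intro w1 hw1 w2 hw2 h2
      simp only [Finset.mem_filter] at hw1 hw2
      exact Prod.ext (hw1.2.trans hw2.2.symm) h2
    · intro h hh
      simp only [Finset.mem_filter, Finset.mem_univ, true_and] at hh
      exact ⟨(f, h), by simp [hf', hh.1, hh.2], rfl⟩
  · intro w hw
    simp only [Finset.mem_coe, Finset.mem_filter, Finset.mem_univ, true_and] at hw ⊢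
    exact fun a b hab => hw.1 hab


def inL {m : ℕ} (i : Fin m) : Fin (2*m) := ⟨i.1, by have := i.2; omega⟩
def inR {m : ℕ} (j : Fin m) : Fin (2*m) := ⟨m + j.1, by have := j.2; omega⟩

@[simp] lemma inL_val {m : ℕ} (i : Fin m) : (inL i : ℕ) = i := rfl
@[simp] lemma inR_val {m : ℕ} (j : Fin m) : (inR j : ℕ) = m + j := rfl

lemma inL_inj {m : ℕ} : Function.Injective (inL (m := m)) := by
  intro a b h; have := congrArg Fin.val h; simp only [inL_val] at this; ext; omega

lemma inR_inj {m : ℕ} : Function.Injective (inR (m := m)) := by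
  intro a b h; have := congrArg Fin.val h; simp only [inR_val] at this; ext; omega

lemma cardCompl {m t : ℕ} (g : Fin t → Fin m) (hg : Function.Injective g) (ht : t ≤ m) :
    ((Finset.image g Finset.univ)ᶜ : Finset (Fin m)).card = m - t := by
  rw [Finset.card_compl, Finset.card_image_of_injective _ hg]
  simp

/-- increasing enumeration of the complement of the range of `g` -/
noncomputable def cEmb {m t : ℕ} (g : Fin t → Fin m) (hg : Function.Injective g) (ht : t ≤ m) :
    Fin (m - t) ≃o ↥((Finset.image g Finset.univ)ᶜ : Finset (Fin m)) :=
  Finset.orderIsoOfFin _ (cardCompl g hg ht)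

noncomputable def psi {m t : ℕ} (f1 h1 f2 h2 : Fin t → Fin m)
    (π1 π2 : Fin (m-t) ≃ Fin (m-t))
    (hf1 : Function.Injective f1) (hh1 : Function.Injective h1)
    (hf2 : Function.Injective f2) (hh2 : Function.Injective h2) (ht : t ≤ m) :
    Fin (2*m) → Fin (2*m) := fun x =>
  if hx : (x : ℕ) < m then
    if hi : ∃ k, f2 k = ⟨x, hx⟩ then inR (h2 hi.choose)
    else inL ((cEmb f1 hf1 ht) (π1 ((cEmb f2 hf2 ht).symm
      ⟨⟨x, hx⟩, by simpa using fun k hk => hi ⟨k, hk⟩⟩)))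
  else
    if hj : ∃ k, h1 k = ⟨x - m, by have := x.2; omega⟩ then inL (f1 hj.choose)
    else inR ((cEmb h2 hh2 ht) (π2 ((cEmb h1 hh1 ht).symm
      ⟨⟨x - m, by have := x.2; omega⟩, by simpa using fun k hk => hj ⟨k, hk⟩⟩)))

section eval

variable {m t : ℕ} (f1 h1 f2 h2 : Fin t → Fin m) (π1 π2 : Fin (m-t) ≃ Fin (m-t))
    (hf1 : Function.Injective f1) (hh1 : Function.Injective h1)
    (hf2 : Function.Injective f2) (hh2 : Function.Injective h2) (ht : t ≤ m)

lemma psi_LR (k : Fin t) :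
    psi f1 h1 f2 h2 π1 π2 hf1 hh1 hf2 hh2 ht (inL (f2 k)) = inR (h2 k) := by
  have hx : ((inL (f2 k) : Fin (2*m)) : ℕ) < m := (f2 k).2
  have hex : ∃ k', f2 k' = ⟨(inL (f2 k) : Fin (2*m)), hx⟩ := ⟨k, by ext; rfl⟩
  rw [psi, dif_pos hx, dif_pos hex]
  have : hex.choose = k := hf2 (hex.choose_spec.trans (by ext; rfl))
  rw [this]

lemma psi_LL (i : Fin m) (hi : i ∈ ((Finset.image f2 Finset.univ)ᶜ : Finset (Fin m))) :
    psi f1 h1 f2 h2 π1 π2 hf1 hh1 hf2 hh2 ht (inL i)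
      = inL ((cEmb f1 hf1 ht) (π1 ((cEmb f2 hf2 ht).symm ⟨i, hi⟩))) := by
  have hx : ((inL i : Fin (2*m)) : ℕ) < m := i.2
  have hne : ¬ ∃ k, f2 k = ⟨(inL i : Fin (2*m)), hx⟩ := by
    simp only [Finset.mem_compl, Finset.mem_image, Finset.mem_univ, true_and] at hi
    rintro ⟨k, hk⟩
    exact hi ⟨k, hk.trans (by ext; rfl)⟩
  rw [psi, dif_pos hx, dif_neg hne]
  rfl

lemma psi_RL (k : Fin t) :
    psi f1 h1 f2 h2 π1 π2 hf1 hh1 hf2 hh2 ht (inR (h1 k)) = inL (f1 k) := by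
  have hx : ¬ ((inR (h1 k) : Fin (2*m)) : ℕ) < m := by simp
  have hex : ∃ k', h1 k' = ⟨(inR (h1 k) : Fin (2*m)) - m, by simp⟩ :=
    ⟨k, by ext; simp⟩
  rw [psi, dif_neg hx, dif_pos hex]
  have : hex.choose = k := hh1 (hex.choose_spec.trans (by ext; simp))
  rw [this]

lemma psi_RR (j : Fin m) (hj : j ∈ ((Finset.image h1 Finset.univ)ᶜ : Finset (Fin m))) :
    psi f1 h1 f2 h2 π1 π2 hf1 hh1 hf2 hh2 ht (inR j)
      = inR ((cEmb h2 hh2 ht) (π2 ((cEmb h1 hh1 ht).symm ⟨j, hj⟩))) := by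
  have hx : ¬ ((inR j : Fin (2*m)) : ℕ) < m := by simp
  have hne : ¬ ∃ k, h1 k = ⟨(inR j : Fin (2*m)) - m, by simp⟩ := by
    simp only [Finset.mem_compl, Finset.mem_image, Finset.mem_univ, true_and] at hj
    rintro ⟨k, hk⟩
    exact hj ⟨k, hk.trans (by ext; simp)⟩
  rw [psi, dif_neg hx, dif_neg hne]
  congr 3
  ext
  simp

end eval

section inv

variable {m t : ℕ} (f1 h1 f2 h2 : Fin t → Fin m) (π1 π2 : Fin (m-t) ≃ Fin (m-t))
    (hf1 : Function.Injective f1) (hh1 : Function.Injective h1)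
    (hf2 : Function.Injective f2) (hh2 : Function.Injective h2) (ht : t ≤ m)

lemma psi_leftinv : Function.LeftInverse
    (psi f2 h2 f1 h1 π1.symm π2.symm hf2 hh2 hf1 hh1 ht)
    (psi f1 h1 f2 h2 π1 π2 hf1 hh1 hf2 hh2 ht) := by
  intro x
  by_cases hx : (x : ℕ) < m
  · have hxeq : x = inL (⟨x, hx⟩ : Fin m) := by ext; rfl
    by_cases hi : ∃ k, f2 k = (⟨x, hx⟩ : Fin m)
    · obtain ⟨k, hk⟩ := hi
      rw [hxeq, ← hk, psi_LR, psi_RL]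
    · have hi' : (⟨x, hx⟩ : Fin m) ∈ ((Finset.image f2 Finset.univ)ᶜ : Finset (Fin m)) := by
        simpa using fun k hk => hi ⟨k, hk⟩
      rw [hxeq, psi_LL f1 h1 f2 h2 π1 π2 hf1 hh1 hf2 hh2 ht _ hi']
      set a := (cEmb f1 hf1 ht) (π1 ((cEmb f2 hf2 ht).symm ⟨⟨x, hx⟩, hi'⟩)) with ha
      rw [psi_LL f2 h2 f1 h1 π1.symm π2.symm hf2 hh2 hf1 hh1 ht _ a.2,
        show (⟨(a : Fin m), a.2⟩ : {y // y ∈ ((Finset.image f1 Finset.univ)ᶜ : Finset (Fin m))}) = a from rfl,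
        ha, OrderIso.symm_apply_apply, Equiv.symm_apply_apply, OrderIso.apply_symm_apply]
  · have hxm : (x : ℕ) - m < m := by have := x.2; omega
    have hxeq : x = inR (⟨(x : ℕ) - m, hxm⟩ : Fin m) := by ext; simp; omega
    by_cases hj : ∃ k, h1 k = (⟨(x : ℕ) - m, hxm⟩ : Fin m)
    · obtain ⟨k, hk⟩ := hj
      rw [hxeq, ← hk, psi_RL, psi_LR]
    · have hj' : (⟨(x : ℕ) - m, hxm⟩ : Fin m) ∈ ((Finset.image h1 Finset.univ)ᶜ : Finset (Fin m)) := by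
        simpa using fun k hk => hj ⟨k, hk⟩
      rw [hxeq, psi_RR f1 h1 f2 h2 π1 π2 hf1 hh1 hf2 hh2 ht _ hj']
      set a := (cEmb h2 hh2 ht) (π2 ((cEmb h1 hh1 ht).symm ⟨_, hj'⟩)) with ha
      rw [psi_RR f2 h2 f1 h1 π1.symm π2.symm hf2 hh2 hf1 hh1 ht _ a.2,
        show (⟨(a : Fin m), a.2⟩ : {y // y ∈ ((Finset.image h2 Finset.univ)ᶜ : Finset (Fin m))}) = a from rfl,
        ha, OrderIso.symm_apply_apply, Equiv.symm_apply_apply, OrderIso.apply_symm_apply]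

noncomputable def psiPerm : Equiv.Perm (Fin (2*m)) :=
  ⟨psi f1 h1 f2 h2 π1 π2 hf1 hh1 hf2 hh2 ht,
   psi f2 h2 f1 h1 π1.symm π2.symm hf2 hh2 hf1 hh1 ht,
   psi_leftinv f1 h1 f2 h2 π1 π2 hf1 hh1 hf2 hh2 ht,
   by have := psi_leftinv f2 h2 f1 h1 π1.symm π2.symm hf2 hh2 hf1 hh1 ht
      simp only [Equiv.symm_symm] at this
      exact this⟩

@[simp] lemma psiPerm_apply (x : Fin (2*m)) :
    psiPerm f1 h1 f2 h2 π1 π2 hf1 hh1 hf2 hh2 ht x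
      = psi f1 h1 f2 h2 π1 π2 hf1 hh1 hf2 hh2 ht x := rfl

@[simp] lemma psiPerm_symm_apply (x : Fin (2*m)) :
    (psiPerm f1 h1 f2 h2 π1 π2 hf1 hh1 hf2 hh2 ht).symm x
      = psi f2 h2 f1 h1 π1.symm π2.symm hf2 hh2 hf1 hh1 ht x := rfl

end inv

section phi

variable {m t : ℕ}

def V1 (σ : Equiv.Perm (Fin (2*m))) : Finset (Fin m) :=
  Finset.univ.filter (fun a => m ≤ ((σ.symm (inL a) : Fin (2*m)) : ℕ))

def V2 (σ : Equiv.Perm (Fin (2*m))) : Finset (Fin m) :=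
  Finset.univ.filter (fun i => m ≤ ((σ (inL i) : Fin (2*m)) : ℕ))

lemma cardV1 (σ : Equiv.Perm (Fin (2*m)))
    (hc : (Finset.univ.filter
      (fun j : Fin (2*m) => m ≤ (j : ℕ) ∧ ((σ j : Fin (2*m)) : ℕ) < m)).card = t) :
    (V1 σ).card = t := by
  rw [← hc]
  apply Finset.card_bij (fun a _ => σ.symm (inL a))
  · intro a ha
    rw [V1, Finset.mem_filter] at ha
    simp only [Finset.mem_filter, Finset.mem_univ, true_and]
    refine ⟨ha.2, ?_⟩
    rw [Equiv.apply_symm_apply]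
    exact a.2
  · intro a _ b _ h
    exact inL_inj (σ.symm.injective h)
  · intro x hx
    simp only [Finset.mem_filter, Finset.mem_univ, true_and] at hx
    refine ⟨⟨(σ x : ℕ), hx.2⟩, ?_, ?_⟩
    · rw [V1, Finset.mem_filter]
      refine ⟨Finset.mem_univ _, ?_⟩
      have : inL (⟨(σ x : ℕ), hx.2⟩ : Fin m) = σ x := by ext; rfl
      rw [this, Equiv.symm_apply_apply]
      exact hx.1
    · have : inL (⟨(σ x : ℕ), hx.2⟩ : Fin m) = σ x := by ext; rfl
      rw [this, Equiv.symm_apply_apply]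

lemma card_lower (σ : Equiv.Perm (Fin (2*m))) :
    (Finset.univ.filter (fun x : Fin (2*m) => ((σ x : Fin (2*m)) : ℕ) < m)).card = m := by
  have h1 : (Finset.univ.filter (fun x : Fin (2*m) => ((σ x : Fin (2*m)) : ℕ) < m)).card
      = (Finset.univ.filter (fun y : Fin (2*m) => (y : ℕ) < m)).card := by
    apply Finset.card_bij (fun x _ => σ x)
    · intro x hx
      simp only [Finset.mem_filter, Finset.mem_univ, true_and] at hx ⊢
      exact hx
    · intro a _ b _ h
      exact σ.injective h
    · intro y hy
      simp only [Finset.mem_filter, Finset.mem_univ, true_and] at hy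
      exact ⟨σ.symm y, by simp [hy], by simp⟩
  rw [h1]
  have h2 := Finset.card_bij (s := (Finset.univ : Finset (Fin m)))
    (t := Finset.univ.filter (fun y : Fin (2*m) => (y : ℕ) < m))
    (fun i _ => inL i)
    (fun i _ => by simp only [Finset.mem_filter, Finset.mem_univ, true_and]; exact i.2)
    (fun a _ b _ h => inL_inj h)
    (fun y hy => by
      simp only [Finset.mem_filter, Finset.mem_univ, true_and] at hy
      exact ⟨⟨(y : ℕ), hy⟩, Finset.mem_univ _, by ext; rfl⟩)
  rw [← h2, Finset.card_univ, Fintype.card_fin]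

lemma cardV2 (σ : Equiv.Perm (Fin (2*m)))
    (hc : (Finset.univ.filter
      (fun j : Fin (2*m) => m ≤ (j : ℕ) ∧ ((σ j : Fin (2*m)) : ℕ) < m)).card = t) :
    (V2 σ).card = t := by
  -- A := crossings L→R as subset of Fin (2m)
  have hA : (V2 σ).card = (Finset.univ.filter
      (fun x : Fin (2*m) => (x : ℕ) < m ∧ m ≤ ((σ x : Fin (2*m)) : ℕ))).card := by
    apply Finset.card_bij (fun i _ => inL i)
    · intro i hi
      rw [V2, Finset.mem_filter] at hi
      simp only [Finset.mem_filter, Finset.mem_univ, true_and]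
      exact ⟨i.2, hi.2⟩
    · intro a _ b _ h
      exact inL_inj h
    · intro x hx
      simp only [Finset.mem_filter, Finset.mem_univ, true_and] at hx
      refine ⟨⟨(x : ℕ), hx.1⟩, ?_, by ext; rfl⟩
      rw [V2, Finset.mem_filter]
      have : inL (⟨(x : ℕ), hx.1⟩ : Fin m) = x := by ext; rfl
      rw [this]
      exact ⟨Finset.mem_univ _, hx.2⟩
  -- split #{x < m} by whether σ x < m
  have hsplit1 := Finset.card_filter_add_card_filter_not
    (s := Finset.univ.filter (fun x : Fin (2*m) => (x : ℕ) < m))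
    (p := fun x => m ≤ ((σ x : Fin (2*m)) : ℕ))
  have hsplit2 := Finset.card_filter_add_card_filter_not
    (s := Finset.univ.filter (fun x : Fin (2*m) => ((σ x : Fin (2*m)) : ℕ) < m))
    (p := fun x => m ≤ (x : ℕ))
  rw [Finset.filter_filter, Finset.filter_filter] at hsplit1 hsplit2
  have e1 : (Finset.univ.filter (fun x : Fin (2*m) => (x : ℕ) < m)).card = m :=
    card_lower (σ := Equiv.refl _) |>.symm ▸ (by
      have := card_lower (m := m) (Equiv.refl (Fin (2*m)))
      simpa using this)
  have e2 : (Finset.univ.filter (fun x : Fin (2*m) => ((σ x : Fin (2*m)) : ℕ) < m)).card = m :=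
    card_lower σ
  -- identify pieces
  have eA : (Finset.univ.filter (fun x : Fin (2*m) => (x : ℕ) < m ∧ m ≤ ((σ x : Fin (2*m)) : ℕ))) =
      (Finset.univ.filter (fun a : Fin (2*m) => (a : ℕ) < m ∧ m ≤ ((σ a : Fin (2*m)) : ℕ))) := rfl
  have eB : (Finset.univ.filter (fun a : Fin (2*m) => ((σ a : Fin (2*m)) : ℕ) < m ∧ m ≤ (a : ℕ))) =
      (Finset.univ.filter (fun j : Fin (2*m) => m ≤ (j : ℕ) ∧ ((σ j : Fin (2*m)) : ℕ) < m)) := by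
    apply Finset.filter_congr
    intro x _
    constructor
    · exact fun h => ⟨h.2, h.1⟩
    · exact fun h => ⟨h.2, h.1⟩
  have eC : (Finset.univ.filter (fun a : Fin (2*m) => (a : ℕ) < m ∧ ¬ m ≤ ((σ a : Fin (2*m)) : ℕ))) =
      (Finset.univ.filter (fun a : Fin (2*m) => ((σ a : Fin (2*m)) : ℕ) < m ∧ ¬ m ≤ (a : ℕ))) := by
    apply Finset.filter_congr
    intro x _
    constructor
    · exact fun h => ⟨by omega, by omega⟩
    · exact fun h => ⟨by omega, by omega⟩
  rw [eB] at hsplit2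
  rw [eC] at hsplit1
  rw [hA]
  omega

end phi

section comps

variable {m t : ℕ} (σ : Equiv.Perm (Fin (2*m)))
  (hc : (Finset.univ.filter
      (fun j : Fin (2*m) => m ≤ (j : ℕ) ∧ ((σ j : Fin (2*m)) : ℕ) < m)).card = t)

noncomputable def f1P : Fin t → Fin m := fun k => (V1 σ).orderEmbOfFin (cardV1 σ hc) k

noncomputable def f2P : Fin t → Fin m := fun k => (V2 σ).orderEmbOfFin (cardV2 σ hc) k

lemma f1P_mem (k : Fin t) : f1P σ hc k ∈ V1 σ := Finset.orderEmbOfFin_mem _ _ _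

lemma f2P_mem (k : Fin t) : f2P σ hc k ∈ V2 σ := Finset.orderEmbOfFin_mem _ _ _

lemma f1P_big (k : Fin t) : m ≤ ((σ.symm (inL (f1P σ hc k)) : Fin (2*m)) : ℕ) := by
  have := f1P_mem σ hc k
  rw [V1, Finset.mem_filter] at this
  exact this.2

lemma f2P_big (k : Fin t) : m ≤ ((σ (inL (f2P σ hc k)) : Fin (2*m)) : ℕ) := by
  have := f2P_mem σ hc k
  rw [V2, Finset.mem_filter] at this
  exact this.2

noncomputable def h1P : Fin t → Fin m := fun k =>
  ⟨((σ.symm (inL (f1P σ hc k)) : Fin (2*m)) : ℕ) - m, by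
    have h2 := (σ.symm (inL (f1P σ hc k))).2
    have h1 := f1P_big σ hc k
    omega⟩

noncomputable def h2P : Fin t → Fin m := fun k =>
  ⟨((σ (inL (f2P σ hc k)) : Fin (2*m)) : ℕ) - m, by
    have h2 := (σ (inL (f2P σ hc k))).2
    have h1 := f2P_big σ hc k
    omega⟩

lemma sigma_h1P (k : Fin t) : σ (inR (h1P σ hc k)) = inL (f1P σ hc k) := by
  have : inR (h1P σ hc k) = σ.symm (inL (f1P σ hc k)) := by
    ext
    have := f1P_big σ hc k
    simp only [inR_val, h1P]
    omega
  rw [this, Equiv.apply_symm_apply]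

lemma sigma_f2P (k : Fin t) : σ (inL (f2P σ hc k)) = inR (h2P σ hc k) := by
  ext
  have := f2P_big σ hc k
  simp only [inR_val, h2P]
  omega

lemma f1P_strictMono : StrictMono (f1P σ hc) := (Finset.orderEmbOfFin _ _).strictMono

lemma f2P_strictMono : StrictMono (f2P σ hc) := (Finset.orderEmbOfFin _ _).strictMono

lemma h1P_inj : Function.Injective (h1P σ hc) := by
  intro a b h
  have : σ (inR (h1P σ hc a)) = σ (inR (h1P σ hc b)) := by rw [h]
  rw [sigma_h1P, sigma_h1P] at this
  exact (f1P_strictMono σ hc).injective (inL_inj this)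

lemma h2P_inj : Function.Injective (h2P σ hc) := by
  intro a b h
  have : inR (h2P σ hc a) = inR (h2P σ hc b) := by rw [h]
  rw [← sigma_f2P, ← sigma_f2P] at this
  exact (f2P_strictMono σ hc).injective (inL_inj (σ.injective this))

lemma image_f1P : Finset.image (f1P σ hc) Finset.univ = V1 σ := by
  apply Finset.coe_injective
  rw [Finset.coe_image, Finset.coe_univ, Set.image_univ]
  exact Finset.range_orderEmbOfFin _ _

lemma image_f2P : Finset.image (f2P σ hc) Finset.univ = V2 σ := by
  apply Finset.coe_injective
  rw [Finset.coe_image, Finset.coe_univ, Set.image_univ]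
  exact Finset.range_orderEmbOfFin _ _

end comps

section pis

variable {m t : ℕ} (σ : Equiv.Perm (Fin (2*m)))
  (hc : (Finset.univ.filter
      (fun j : Fin (2*m) => m ≤ (j : ℕ) ∧ ((σ j : Fin (2*m)) : ℕ) < m)).card = t)
  (ht : t ≤ m)

lemma sigma_small_not_f2P (i : Fin m)
    (hi : i ∉ Finset.image (f2P σ hc) Finset.univ) : ((σ (inL i) : Fin (2*m)) : ℕ) < m := by
  rw [image_f2P] at hi
  rw [V2, Finset.mem_filter] at hi
  push_neg at hi
  exact hi (Finset.mem_univ _)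

lemma sigma_big_not_h1P (j : Fin m)
    (hj : j ∉ Finset.image (h1P σ hc) Finset.univ) : m ≤ ((σ (inR j) : Fin (2*m)) : ℕ) := by
  by_contra hlt
  push_neg at hlt
  set a : Fin m := ⟨((σ (inR j) : Fin (2*m)) : ℕ), hlt⟩ with ha
  have hinla : inL a = σ (inR j) := by ext; rfl
  have haV1 : a ∈ V1 σ := by
    rw [V1, Finset.mem_filter]
    refine ⟨Finset.mem_univ _, ?_⟩
    rw [hinla, Equiv.symm_apply_apply]
    simp
  rw [← image_f1P σ hc, Finset.mem_image] at haV1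
  obtain ⟨k, -, hk⟩ := haV1
  have : inR j = inR (h1P σ hc k) := by
    rw [← Equiv.symm_apply_apply σ (inR j), ← hinla, ← hk, ← sigma_h1P σ hc k,
      Equiv.symm_apply_apply]
  exact hj (Finset.mem_image.mpr ⟨k, Finset.mem_univ _, (inR_inj this).symm⟩)

noncomputable def g1P : Fin (m-t) → Fin (m-t) := fun k =>
  (cEmb (f1P σ hc) (f1P_strictMono σ hc).injective ht).symm
    ⟨⟨((σ (inL ((cEmb (f2P σ hc) (f2P_strictMono σ hc).injective ht k : _) : Fin m))
        : Fin (2*m)) : ℕ),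
      sigma_small_not_f2P σ hc _
        (Finset.mem_compl.mp (cEmb (f2P σ hc) (f2P_strictMono σ hc).injective ht k).2)⟩, by
      rw [image_f1P, V1, Finset.mem_compl, Finset.mem_filter]
      rintro ⟨-, hbig⟩
      have hIL : inL (⟨((σ (inL ((cEmb (f2P σ hc) (f2P_strictMono σ hc).injective ht k : _)
          : Fin m)) : Fin (2*m)) : ℕ), sigma_small_not_f2P σ hc _
          (Finset.mem_compl.mp (cEmb (f2P σ hc) (f2P_strictMono σ hc).injective ht k).2)⟩ : Fin m)
          = σ (inL ((cEmb (f2P σ hc) (f2P_strictMono σ hc).injective ht k : _) : Fin m)) := by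
        ext; rfl
      rw [hIL, Equiv.symm_apply_apply] at hbig
      simp only [inL_val] at hbig
      have := ((cEmb (f2P σ hc) (f2P_strictMono σ hc).injective ht k : _) : Fin m).2
      omega⟩

noncomputable def g2P : Fin (m-t) → Fin (m-t) := fun k =>
  (cEmb (h2P σ hc) (h2P_inj σ hc) ht).symm
    ⟨⟨((σ (inR ((cEmb (h1P σ hc) (h1P_inj σ hc) ht k : _) : Fin m)) : Fin (2*m)) : ℕ) - m, by
      have h1 := sigma_big_not_h1P σ hc _
        (Finset.mem_compl.mp (cEmb (h1P σ hc) (h1P_inj σ hc) ht k).2)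
      have h2 := (σ (inR ((cEmb (h1P σ hc) (h1P_inj σ hc) ht k : _) : Fin m))).2
      omega⟩, by
      have h1 := sigma_big_not_h1P σ hc _
        (Finset.mem_compl.mp (cEmb (h1P σ hc) (h1P_inj σ hc) ht k).2)
      rw [Finset.mem_compl, Finset.mem_image]
      rintro ⟨k0, -, hk0⟩
      have hval : σ (inL (f2P σ hc k0))
          = σ (inR ((cEmb (h1P σ hc) (h1P_inj σ hc) ht k : _) : Fin m)) := by
        rw [sigma_f2P σ hc k0, hk0]
        ext
        simp only [inR_val]
        omega
      have h6 := congrArg Fin.val (σ.injective hval)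
      simp only [inL_val, inR_val] at h6
      have := (f2P σ hc k0).2
      omega⟩

lemma g1P_inj : Function.Injective (g1P σ hc ht) := by
  intro a b h
  have h2 := (cEmb (f1P σ hc) (f1P_strictMono σ hc).injective ht).symm.injective h
  have h3 := congrArg (fun z => z.1.1) h2
  simp only at h3
  have h4 : σ (inL ((cEmb (f2P σ hc) (f2P_strictMono σ hc).injective ht a : _) : Fin m))
      = σ (inL ((cEmb (f2P σ hc) (f2P_strictMono σ hc).injective ht b : _) : Fin m)) := by
    ext; exact h3
  have h5 := inL_inj (σ.injective h4)
  exact (cEmb (f2P σ hc) (f2P_strictMono σ hc).injective ht).injective (Subtype.ext h5)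

lemma g2P_inj : Function.Injective (g2P σ hc ht) := by
  intro a b h
  have h2 := (cEmb (h2P σ hc) (h2P_inj σ hc) ht).symm.injective h
  have h3 := congrArg (fun z => z.1.1) h2
  simp only at h3
  have hba := sigma_big_not_h1P σ hc ((cEmb (h1P σ hc) (h1P_inj σ hc) ht a : _) : Fin m)
    (Finset.mem_compl.mp (cEmb (h1P σ hc) (h1P_inj σ hc) ht a).2)
  have hbb := sigma_big_not_h1P σ hc ((cEmb (h1P σ hc) (h1P_inj σ hc) ht b : _) : Fin m)
    (Finset.mem_compl.mp (cEmb (h1P σ hc) (h1P_inj σ hc) ht b).2)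
  have h4 : σ (inR ((cEmb (h1P σ hc) (h1P_inj σ hc) ht a : _) : Fin m))
      = σ (inR ((cEmb (h1P σ hc) (h1P_inj σ hc) ht b : _) : Fin m)) := by
    ext; omega
  have h5 := inR_inj (σ.injective h4)
  exact (cEmb (h1P σ hc) (h1P_inj σ hc) ht).injective (Subtype.ext h5)

noncomputable def pi1P : Equiv.Perm (Fin (m-t)) :=
  Equiv.ofBijective _ (Finite.injective_iff_bijective.mp (g1P_inj σ hc ht))

noncomputable def pi2P : Equiv.Perm (Fin (m-t)) :=
  Equiv.ofBijective _ (Finite.injective_iff_bijective.mp (g2P_inj σ hc ht))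

@[simp] lemma pi1P_apply (z : Fin (m-t)) : pi1P σ hc ht z = g1P σ hc ht z := rfl
@[simp] lemma pi2P_apply (z : Fin (m-t)) : pi2P σ hc ht z = g2P σ hc ht z := rfl

end pis

section rt1

variable {m t : ℕ} (σ : Equiv.Perm (Fin (2*m)))
  (hc : (Finset.univ.filter
      (fun j : Fin (2*m) => m ≤ (j : ℕ) ∧ ((σ j : Fin (2*m)) : ℕ) < m)).card = t)
  (ht : t ≤ m)

theorem roundtrip1 :
    psiPerm (f1P σ hc) (h1P σ hc) (f2P σ hc) (h2P σ hc) (pi1P σ hc ht) (pi2P σ hc ht)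
      (f1P_strictMono σ hc).injective (h1P_inj σ hc)
      (f2P_strictMono σ hc).injective (h2P_inj σ hc) ht = σ := by
  apply Equiv.ext
  intro x
  rw [psiPerm_apply]
  by_cases hx : (x : ℕ) < m
  · set i : Fin m := ⟨x, hx⟩ with hidef
    have hxeq : x = inL i := by ext; rfl
    by_cases hi : i ∈ Finset.image (f2P σ hc) Finset.univ
    · obtain ⟨k, -, hk⟩ := Finset.mem_image.mp hi
      rw [hxeq, ← hk, psi_LR, sigma_f2P]
    · have hi' : i ∈ ((Finset.image (f2P σ hc) Finset.univ)ᶜ : Finset (Fin m)) :=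
        Finset.mem_compl.mpr hi
      rw [hxeq, psi_LL _ _ _ _ _ _ _ _ _ _ _ i hi']
      set z := (cEmb (f2P σ hc) (f2P_strictMono σ hc).injective ht).symm ⟨i, hi'⟩ with hz
      rw [pi1P_apply]
      simp only [g1P]
      rw [OrderIso.apply_symm_apply]
      have hcz : ((cEmb (f2P σ hc) (f2P_strictMono σ hc).injective ht) z : Fin m) = i := by
        rw [hz, OrderIso.apply_symm_apply]
      ext
      simp only [inL_val]
      rw [hcz]
  · have hxm : (x : ℕ) - m < m := by have := x.2; omega
    set j : Fin m := ⟨(x : ℕ) - m, hxm⟩ with hjdef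
    have hxeq : x = inR j := by ext; simp only [inR_val, hjdef]; omega
    by_cases hj : j ∈ Finset.image (h1P σ hc) Finset.univ
    · obtain ⟨k, -, hk⟩ := Finset.mem_image.mp hj
      rw [hxeq, ← hk, psi_RL]
      exact (sigma_h1P σ hc k).symm
    · have hj' : j ∈ ((Finset.image (h1P σ hc) Finset.univ)ᶜ : Finset (Fin m)) :=
        Finset.mem_compl.mpr hj
      rw [hxeq, psi_RR _ _ _ _ _ _ _ _ _ _ _ j hj']
      set z := (cEmb (h1P σ hc) (h1P_inj σ hc) ht).symm ⟨j, hj'⟩ with hz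
      rw [pi2P_apply]
      simp only [g2P]
      rw [OrderIso.apply_symm_apply]
      have hcz : ((cEmb (h1P σ hc) (h1P_inj σ hc) ht) z : Fin m) = j := by
        rw [hz, OrderIso.apply_symm_apply]
      have hbig := sigma_big_not_h1P σ hc j hj
      ext
      simp only [inR_val]
      rw [hcz]
      omega

end rt1

section les

variable {m t : ℕ} (σ : Equiv.Perm (Fin (2*m)))
  (hb : ∀ i : Fin (2*m), -(m : ℤ) ≤ ((σ i : ℕ) : ℤ) - ((i : ℕ) : ℤ) ∧
          ((σ i : ℕ) : ℤ) - ((i : ℕ) : ℤ) ≤ (m : ℤ))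
  (hc : (Finset.univ.filter
      (fun j : Fin (2*m) => m ≤ (j : ℕ) ∧ ((σ j : Fin (2*m)) : ℕ) < m)).card = t)

include hb in
lemma h1P_le (k : Fin t) : h1P σ hc k ≤ f1P σ hc k := by
  have hb1 := (hb (inR (h1P σ hc k))).1
  rw [sigma_h1P] at hb1
  simp only [inL_val, inR_val] at hb1
  rw [Fin.le_def]
  have hval : (h1P σ hc k : ℕ) = ((σ.symm (inL (f1P σ hc k)) : Fin (2*m)) : ℕ) - m := rfl
  have hbig := f1P_big σ hc k
  omega

include hb in
lemma h2P_le (k : Fin t) : h2P σ hc k ≤ f2P σ hc k := by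
  have hb1 := (hb (inL (f2P σ hc k))).2
  rw [sigma_f2P] at hb1
  simp only [inL_val, inR_val] at hb1
  rw [Fin.le_def]
  have hval : (h2P σ hc k : ℕ) = ((σ (inL (f2P σ hc k)) : Fin (2*m)) : ℕ) - m := rfl
  have hbig := f2P_big σ hc k
  omega

end les

section mem

variable {m t : ℕ} (f1 h1 f2 h2 : Fin t → Fin m) (π1 π2 : Fin (m-t) ≃ Fin (m-t))
    (hf1 : Function.Injective f1) (hh1 : Function.Injective h1)
    (hf2 : Function.Injective f2) (hh2 : Function.Injective h2) (ht : t ≤ m)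
    (hle1 : ∀ k, h1 k ≤ f1 k) (hle2 : ∀ k, h2 k ≤ f2 k)

include hle1 hle2 in
lemma psiPerm_bounds : ∀ x : Fin (2*m),
    -(m : ℤ) ≤ (((psiPerm f1 h1 f2 h2 π1 π2 hf1 hh1 hf2 hh2 ht x : Fin (2*m)) : ℕ) : ℤ)
        - ((x : ℕ) : ℤ) ∧
      (((psiPerm f1 h1 f2 h2 π1 π2 hf1 hh1 hf2 hh2 ht x : Fin (2*m)) : ℕ) : ℤ)
        - ((x : ℕ) : ℤ) ≤ (m : ℤ) := by
  intro x
  rw [psiPerm_apply]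
  by_cases hx : (x : ℕ) < m
  · set i : Fin m := ⟨x, hx⟩ with hidef
    have hxeq : x = inL i := by ext; rfl
    by_cases hi : ∃ k, f2 k = i
    · obtain ⟨k, hk⟩ := hi
      rw [hxeq, ← hk, psi_LR]
      have h1' := (f2 k).2
      have h2' := (h2 k).2
      have h3' := hle2 k
      rw [Fin.le_def] at h3'
      simp only [inL_val, inR_val]
      omega
    · have hi' : i ∈ ((Finset.image f2 Finset.univ)ᶜ : Finset (Fin m)) := by
        simpa using fun k hk => hi ⟨k, hk⟩
      rw [hxeq, psi_LL _ _ _ _ _ _ _ _ _ _ _ i hi']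
      have h1' := ((cEmb f1 hf1 ht) (π1 ((cEmb f2 hf2 ht).symm ⟨i, hi'⟩)) : Fin m).2
      have h2' := i.2
      simp only [inL_val]
      omega
  · have hxm : (x : ℕ) - m < m := by have := x.2; omega
    set j : Fin m := ⟨(x : ℕ) - m, hxm⟩ with hjdef
    have hxeq : x = inR j := by ext; simp only [inR_val, hjdef]; omega
    by_cases hj : ∃ k, h1 k = j
    · obtain ⟨k, hk⟩ := hj
      rw [hxeq, ← hk, psi_RL]
      have h1' := (f1 k).2
      have h2' := (h1 k).2
      have h3' := hle1 k
      rw [Fin.le_def] at h3'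
      simp only [inL_val, inR_val]
      omega
    · have hj' : j ∈ ((Finset.image h1 Finset.univ)ᶜ : Finset (Fin m)) := by
        simpa using fun k hk => hj ⟨k, hk⟩
      rw [hxeq, psi_RR _ _ _ _ _ _ _ _ _ _ _ j hj']
      have h1' := ((cEmb h2 hh2 ht) (π2 ((cEmb h1 hh1 ht).symm ⟨j, hj'⟩)) : Fin m).2
      have h2' := j.2
      simp only [inR_val]
      omega

lemma psiPerm_count :
    (Finset.univ.filter (fun x : Fin (2*m) => m ≤ (x : ℕ) ∧
      ((psiPerm f1 h1 f2 h2 π1 π2 hf1 hh1 hf2 hh2 ht x : Fin (2*m)) : ℕ) < m)).card = t := by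
  have himg : (Finset.univ.filter (fun x : Fin (2*m) => m ≤ (x : ℕ) ∧
      ((psiPerm f1 h1 f2 h2 π1 π2 hf1 hh1 hf2 hh2 ht x : Fin (2*m)) : ℕ) < m))
      = Finset.image (fun k => inR (h1 k)) Finset.univ := by
    ext x
    simp only [Finset.mem_filter, Finset.mem_univ, true_and, Finset.mem_image]
    constructor
    · rintro ⟨hmx, hlt⟩
      have hxm : (x : ℕ) - m < m := by have := x.2; omega
      set j : Fin m := ⟨(x : ℕ) - m, hxm⟩ with hjdef
      have hxeq : x = inR j := by ext; simp only [inR_val, hjdef]; omega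
      by_cases hj : ∃ k, h1 k = j
      · obtain ⟨k, hk⟩ := hj
        exact ⟨k, by rw [hxeq, ← hk]⟩
      · exfalso
        have hj' : j ∈ ((Finset.image h1 Finset.univ)ᶜ : Finset (Fin m)) := by
          simpa using fun k hk => hj ⟨k, hk⟩
        rw [psiPerm_apply, hxeq, psi_RR _ _ _ _ _ _ _ _ _ _ _ j hj'] at hlt
        simp only [inR_val] at hlt
        omega
    · rintro ⟨k, rfl⟩
      rw [psiPerm_apply, psi_RL]
      simp only [inL_val, inR_val]
      have := (f1 k).2
      have := (h1 k).2
      omega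
  rw [himg, Finset.card_image_of_injective _ (fun a b hab => hh1 (inR_inj hab)),
    Finset.card_univ, Fintype.card_fin]

end mem

lemma cEmb_congr {m t : ℕ} {g g' : Fin t → Fin m} (hgg : g = g')
    (hg : Function.Injective g) (hg' : Function.Injective g') (ht : t ≤ m) (z : Fin (m-t)) :
    ((cEmb g hg ht z : _) : Fin m) = ((cEmb g' hg' ht z : _) : Fin m) := by
  subst hgg; rfl

section rt2
set_option maxHeartbeats 2000000

variable {m t : ℕ} (f1 h1 f2 h2 : Fin t → Fin m) (π1 π2 : Fin (m-t) ≃ Fin (m-t))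
    (hf1s : StrictMono f1) (hh1 : Function.Injective h1)
    (hf2s : StrictMono f2) (hh2 : Function.Injective h2) (ht : t ≤ m)

local notation "σ'" => psiPerm f1 h1 f2 h2 π1 π2 hf1s.injective hh1 hf2s.injective hh2 ht

lemma V2_psiPerm : V2 σ' = Finset.image f2 Finset.univ := by
  ext i
  rw [V2, Finset.mem_filter]
  simp only [Finset.mem_univ, true_and]
  constructor
  · intro hbig
    by_contra hni
    have hi' : i ∈ ((Finset.image f2 Finset.univ)ᶜ : Finset (Fin m)) := Finset.mem_compl.mpr hni
    rw [psiPerm_apply, psi_LL _ _ _ _ _ _ _ _ _ _ _ i hi'] at hbig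
    simp only [inL_val] at hbig
    have := ((cEmb f1 hf1s.injective ht) (π1 ((cEmb f2 hf2s.injective ht).symm ⟨i, hi'⟩)) : Fin m).2
    omega
  · intro hmem
    obtain ⟨k, -, rfl⟩ := Finset.mem_image.mp hmem
    rw [psiPerm_apply, psi_LR]
    simp only [inR_val]
    omega

lemma V1_psiPerm : V1 σ' = Finset.image f1 Finset.univ := by
  ext a
  rw [V1, Finset.mem_filter]
  simp only [Finset.mem_univ, true_and]
  constructor
  · intro hbig
    by_contra hna
    have ha' : a ∈ ((Finset.image f1 Finset.univ)ᶜ : Finset (Fin m)) := Finset.mem_compl.mpr hna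
    rw [psiPerm_symm_apply,
      psi_LL f2 h2 f1 h1 π1.symm π2.symm hf2s.injective hh2 hf1s.injective hh1 ht a ha'] at hbig
    simp only [inL_val] at hbig
    have := ((cEmb f2 hf2s.injective ht)
      (π1.symm ((cEmb f1 hf1s.injective ht).symm ⟨a, ha'⟩)) : Fin m).2
    omega
  · intro hmem
    obtain ⟨k, -, rfl⟩ := Finset.mem_image.mp hmem
    rw [psiPerm_symm_apply,
      psi_LR f2 h2 f1 h1 π1.symm π2.symm hf2s.injective hh2 hf1s.injective hh1 ht k]
    simp only [inR_val]
    omega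

variable (sig : Equiv.Perm (Fin (2*m)))
  (hcs : (Finset.univ.filter
      (fun j : Fin (2*m) => m ≤ (j : ℕ) ∧ ((sig j : Fin (2*m)) : ℕ) < m)).card = t)

lemma f2P_psiPerm (hsig : sig = σ') : f2P sig hcs = f2 := by
  have huniq := Finset.orderEmbOfFin_unique (cardV2 sig hcs) (f := f2)
    (fun k => by
      rw [hsig, V2_psiPerm f1 h1 f2 h2 π1 π2 hf1s hh1 hf2s hh2 ht]
      exact Finset.mem_image.mpr ⟨k, Finset.mem_univ _, rfl⟩) hf2s
  funext k
  exact (congrFun huniq k).symm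

lemma f1P_psiPerm (hsig : sig = σ') : f1P sig hcs = f1 := by
  have huniq := Finset.orderEmbOfFin_unique (cardV1 sig hcs) (f := f1)
    (fun k => by
      rw [hsig, V1_psiPerm f1 h1 f2 h2 π1 π2 hf1s hh1 hf2s hh2 ht]
      exact Finset.mem_image.mpr ⟨k, Finset.mem_univ _, rfl⟩) hf1s
  funext k
  exact (congrFun huniq k).symm

lemma h2P_psiPerm (hsig : sig = σ') : h2P sig hcs = h2 := by
  funext k
  have e1 : f2P sig hcs k = f2 k :=
    congrFun (f2P_psiPerm f1 h1 f2 h2 π1 π2 hf1s hh1 hf2s hh2 ht sig hcs hsig) k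
  have e2 : (h2P sig hcs k : ℕ) = ((sig (inL (f2P sig hcs k)) : Fin (2*m)) : ℕ) - m := rfl
  rw [e1] at e2
  have e3 : sig (inL (f2 k)) = inR (h2 k) := by rw [hsig, psiPerm_apply, psi_LR]
  rw [e3] at e2
  ext
  rw [e2]
  simp only [inR_val]
  omega

lemma h1P_psiPerm (hsig : sig = σ') : h1P sig hcs = h1 := by
  funext k
  have e1 : f1P sig hcs k = f1 k :=
    congrFun (f1P_psiPerm f1 h1 f2 h2 π1 π2 hf1s hh1 hf2s hh2 ht sig hcs hsig) k
  have e2 : (h1P sig hcs k : ℕ) = ((sig.symm (inL (f1P sig hcs k)) : Fin (2*m)) : ℕ) - m := rfl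
  rw [e1] at e2
  have e3 : sig.symm (inL (f1 k)) = inR (h1 k) := by
    rw [hsig, psiPerm_symm_apply,
      psi_LR f2 h2 f1 h1 π1.symm π2.symm hf2s.injective hh2 hf1s.injective hh1 ht k]
  rw [e3] at e2
  ext
  rw [e2]
  simp only [inR_val]
  omega

lemma pi1P_psiPerm (hsig : sig = σ') : pi1P sig hcs ht = π1 := by
  apply Equiv.ext
  intro z
  rw [pi1P_apply]
  apply (cEmb (f1P sig hcs) (f1P_strictMono sig hcs).injective ht).injective
  simp only [g1P]
  rw [OrderIso.apply_symm_apply]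
  apply Subtype.ext
  apply Fin.ext
  have hX : ((cEmb (f2P sig hcs) (f2P_strictMono sig hcs).injective ht z : _) : Fin m)
      = ((cEmb f2 hf2s.injective ht z : _) : Fin m) :=
    cEmb_congr (f2P_psiPerm f1 h1 f2 h2 π1 π2 hf1s hh1 hf2s hh2 ht sig hcs hsig) _ _ ht z
  have hmem := (cEmb f2 hf2s.injective ht z).2
  have hval : sig (inL ((cEmb f2 hf2s.injective ht z : _) : Fin m))
      = inL ((cEmb f1 hf1s.injective ht (π1 z) : _) : Fin m) := by
    rw [hsig, psiPerm_apply,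
      psi_LL f1 h1 f2 h2 π1 π2 hf1s.injective hh1 hf2s.injective hh2 ht _ hmem,
      show (⟨((cEmb f2 hf2s.injective ht z : _) : Fin m), hmem⟩ :
        {y // y ∈ ((Finset.image f2 Finset.univ)ᶜ : Finset (Fin m))})
        = cEmb f2 hf2s.injective ht z from rfl,
      OrderIso.symm_apply_apply]
  have hRHS : ((cEmb (f1P sig hcs) (f1P_strictMono sig hcs).injective ht (π1 z) : _) : Fin m)
      = ((cEmb f1 hf1s.injective ht (π1 z) : _) : Fin m) :=
    cEmb_congr (f1P_psiPerm f1 h1 f2 h2 π1 π2 hf1s hh1 hf2s hh2 ht sig hcs hsig) _ _ ht (π1 z)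
  simp only [hX, hval, hRHS, inL_val]

lemma pi2P_psiPerm (hsig : sig = σ') : pi2P sig hcs ht = π2 := by
  apply Equiv.ext
  intro z
  rw [pi2P_apply]
  apply (cEmb (h2P sig hcs) (h2P_inj sig hcs) ht).injective
  simp only [g2P]
  rw [OrderIso.apply_symm_apply]
  apply Subtype.ext
  apply Fin.ext
  have hX : ((cEmb (h1P sig hcs) (h1P_inj sig hcs) ht z : _) : Fin m)
      = ((cEmb h1 hh1 ht z : _) : Fin m) :=
    cEmb_congr (h1P_psiPerm f1 h1 f2 h2 π1 π2 hf1s hh1 hf2s hh2 ht sig hcs hsig) _ _ ht z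
  have hmem := (cEmb h1 hh1 ht z).2
  have hval : sig (inR ((cEmb h1 hh1 ht z : _) : Fin m))
      = inR ((cEmb h2 hh2 ht (π2 z) : _) : Fin m) := by
    rw [hsig, psiPerm_apply,
      psi_RR f1 h1 f2 h2 π1 π2 hf1s.injective hh1 hf2s.injective hh2 ht _ hmem,
      show (⟨((cEmb h1 hh1 ht z : _) : Fin m), hmem⟩ :
        {y // y ∈ ((Finset.image h1 Finset.univ)ᶜ : Finset (Fin m))})
        = cEmb h1 hh1 ht z from rfl,
      OrderIso.symm_apply_apply]
  have hRHS : ((cEmb (h2P sig hcs) (h2P_inj sig hcs) ht (π2 z) : _) : Fin m)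
      = ((cEmb h2 hh2 ht (π2 z) : _) : Fin m) :=
    cEmb_congr (h2P_psiPerm f1 h1 f2 h2 π1 π2 hf1s hh1 hf2s hh2 ht sig hcs hsig) _ _ ht (π2 z)
  simp only [hX, hval, hRHS, inR_val]
  omega

end rt2

theorem stmt7 (m : ℕ) (hm : 2 ≤ m) (t : ℕ) (ht : t ≤ m) :
    (Finset.univ.filter (fun σ : Equiv.Perm (Fin (2 * m)) =>
        (∀ i : Fin (2 * m), -(m : ℤ) ≤ ((σ i : ℕ) : ℤ) - ((i : ℕ) : ℤ) ∧
          ((σ i : ℕ) : ℤ) - ((i : ℕ) : ℤ) ≤ (m : ℤ)) ∧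
        (Finset.univ.filter
          (fun j : Fin (2 * m) => m ≤ (j : ℕ) ∧ (σ j : ℕ) < m)).card = t)).card
      = ((m - t).factorial * u m t) ^ 2 := by
  classical
  set W := Finset.univ.filter (fun w : (Fin t → Fin m) × (Fin t → Fin m) =>
      StrictMono w.1 ∧ Function.Injective w.2 ∧ ∀ k, w.2 k ≤ w.1 k) with hW
  set T := (W ×ˢ W) ×ˢ
      ((Finset.univ : Finset (Equiv.Perm (Fin (m-t)))) ×ˢ
       (Finset.univ : Finset (Equiv.Perm (Fin (m-t))))) with hT
  have hw1 : ∀ d ∈ T, StrictMono d.1.1.1 ∧ Function.Injective d.1.1.2 ∧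
      ∀ k, d.1.1.2 k ≤ d.1.1.1 k := by
    intro d hd
    rw [hT, Finset.mem_product] at hd
    have := (Finset.mem_product.mp hd.1).1
    rw [hW, Finset.mem_filter] at this
    exact this.2
  have hw2 : ∀ d ∈ T, StrictMono d.1.2.1 ∧ Function.Injective d.1.2.2 ∧
      ∀ k, d.1.2.2 k ≤ d.1.2.1 k := by
    intro d hd
    rw [hT, Finset.mem_product] at hd
    have := (Finset.mem_product.mp hd.1).2
    rw [hW, Finset.mem_filter] at this
    exact this.2
  have hST : (Finset.univ.filter (fun σ : Equiv.Perm (Fin (2 * m)) =>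
        (∀ i : Fin (2 * m), -(m : ℤ) ≤ ((σ i : ℕ) : ℤ) - ((i : ℕ) : ℤ) ∧
          ((σ i : ℕ) : ℤ) - ((i : ℕ) : ℤ) ≤ (m : ℤ)) ∧
        (Finset.univ.filter
          (fun j : Fin (2 * m) => m ≤ (j : ℕ) ∧ (σ j : ℕ) < m)).card = t)).card
      = T.card := by
    refine Finset.card_bij'
      (fun σ hσ =>
        (((f1P σ (Finset.mem_filter.mp hσ).2.2, h1P σ (Finset.mem_filter.mp hσ).2.2),
          (f2P σ (Finset.mem_filter.mp hσ).2.2, h2P σ (Finset.mem_filter.mp hσ).2.2)),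
         (pi1P σ (Finset.mem_filter.mp hσ).2.2 ht, pi2P σ (Finset.mem_filter.mp hσ).2.2 ht)))
      (fun d hd =>
        psiPerm d.1.1.1 d.1.1.2 d.1.2.1 d.1.2.2 d.2.1 d.2.2
          (hw1 d hd).1.injective (hw1 d hd).2.1 (hw2 d hd).1.injective (hw2 d hd).2.1 ht)
      ?_ ?_ ?_ ?_
    · intro σ hσ
      have hb := (Finset.mem_filter.mp hσ).2.1
      have hc := (Finset.mem_filter.mp hσ).2.2
      rw [hT, Finset.mem_product]
      constructor
      · rw [Finset.mem_product]
        constructor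
        · rw [hW, Finset.mem_filter]
          exact ⟨Finset.mem_univ _, f1P_strictMono σ hc, h1P_inj σ hc, h1P_le σ hb hc⟩
        · rw [hW, Finset.mem_filter]
          exact ⟨Finset.mem_univ _, f2P_strictMono σ hc, h2P_inj σ hc, h2P_le σ hb hc⟩
      · rw [Finset.mem_product]
        exact ⟨Finset.mem_univ _, Finset.mem_univ _⟩
    · intro d hd
      rw [Finset.mem_filter]
      refine ⟨Finset.mem_univ _, ?_, ?_⟩
      · exact psiPerm_bounds d.1.1.1 d.1.1.2 d.1.2.1 d.1.2.2 d.2.1 d.2.2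
          (hw1 d hd).1.injective (hw1 d hd).2.1 (hw2 d hd).1.injective (hw2 d hd).2.1 ht
          (hw1 d hd).2.2 (hw2 d hd).2.2
      · exact psiPerm_count d.1.1.1 d.1.1.2 d.1.2.1 d.1.2.2 d.2.1 d.2.2
          (hw1 d hd).1.injective (hw1 d hd).2.1 (hw2 d hd).1.injective (hw2 d hd).2.1 ht
    · intro σ hσ
      exact roundtrip1 σ (Finset.mem_filter.mp hσ).2.2 ht
    · intro d hd
      obtain ⟨⟨⟨f1, h1⟩, ⟨f2, h2⟩⟩, ⟨π1, π2⟩⟩ := d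
      simp only [Prod.mk.injEq]
      have hsm1 := (hw1 _ hd).1
      have hinj1 := (hw1 _ hd).2.1
      have hle1 := (hw1 _ hd).2.2
      have hsm2 := (hw2 _ hd).1
      have hinj2 := (hw2 _ hd).2.1
      have hle2 := (hw2 _ hd).2.2
      refine ⟨⟨⟨?_, ?_⟩, ?_, ?_⟩, ?_, ?_⟩
      · exact f1P_psiPerm f1 h1 f2 h2 π1 π2 hsm1 hinj1 hsm2 hinj2 ht _ _ rfl
      · exact h1P_psiPerm f1 h1 f2 h2 π1 π2 hsm1 hinj1 hsm2 hinj2 ht _ _ rfl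
      · exact f2P_psiPerm f1 h1 f2 h2 π1 π2 hsm1 hinj1 hsm2 hinj2 ht _ _ rfl
      · exact h2P_psiPerm f1 h1 f2 h2 π1 π2 hsm1 hinj1 hsm2 hinj2 ht _ _ rfl
      · exact pi1P_psiPerm f1 h1 f2 h2 π1 π2 hsm1 hinj1 hsm2 hinj2 ht _ _ rfl
      · exact pi2P_psiPerm f1 h1 f2 h2 π1 π2 hsm1 hinj1 hsm2 hinj2 ht _ _ rfl
  rw [hST, hT, Finset.card_product, Finset.card_product, Finset.card_product]
  rw [hW, cardW m t]
  rw [Finset.card_univ, Fintype.card_perm, Fintype.card_fin]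
  ring
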